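/- In the Strings and Coins game played on the cycle graph C_n (n ≥ 3), the second player wins, capturing all n vertices: the final score is (0, n). -/

import Mathlib

/-- A position in Strings and Coins: a finite multigraph, with vertex set `verts`
and a multiset of (possibly loop) edges, each given as an ordered pair. -/
structure SCPos (V : Type) where
  verts : Finset V
  edges : Multiset (V × V)

variable {V : Type} [DecidableEq V]

/-- Number of edges incident to `v` (each edge, including a loop, counted once);
only being zero or nonzero matters for captures. -/
def SCPos.deg (p : SCPos V) (v : V) : ℕ :=
  (p.edges.filter (fun f => f.1 = v ∨ f.2 = v)).card

/-- Degree of `v`, where a loop at `v` contributes 2. -/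
def SCPos.degree (p : SCPos V) (v : V) : ℕ :=
  (p.edges.map (fun e => (if e.1 = v then 1 else 0) + (if e.2 = v then 1 else 0))).sum

/-- The position obtained by removing one copy of edge `e`. -/
def SCPos.remove (p : SCPos V) (e : V × V) : SCPos V :=
  ⟨p.verts, p.edges.erase e⟩

/-- The number of vertices captured by removing edge `e` from `p`:
endpoints of `e` whose degree drops to zero. -/
def SCPos.caps (p : SCPos V) (e : V × V) : ℕ :=
  (p.verts.filter (fun v => (v = e.1 ∨ v = e.2) ∧ (p.remove e).deg v = 0)).card

/-- Optimal score `(mover's points, opponent's points)` of Strings and Coins,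
under play where each player maximizes their own number of captured vertices.
A player who captures at least one vertex moves again. -/
noncomputable def SCPos.score (p : SCPos V) : ℕ × ℕ :=
  if h : p.edges = 0 then (0, 0)
  else
    (p.edges.toList.attach.map (fun ⟨e, he⟩ =>
      let s := (p.remove e).score
      let c := p.caps e
      if c = 0 then (s.2, s.1) else (s.1 + c, s.2))).foldl
      (fun best o => if best.1 ≤ o.1 then o else best) (0, 0)
termination_by p.edges.card
decreasing_by
  exact Multiset.card_erase_lt_of_mem (Multiset.mem_toList.mp he)

/-- The cycle graph `C_n` as a Strings and Coins position. -/
def cyclePos (n : ℕ) : SCPos ℕ :=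
  ⟨Finset.range n, ((List.range n).map (fun i => (i, (i + 1) % n)) : List (ℕ × ℕ))⟩

/-- The friendship graph `F_n`: `n` triangles sharing the common vertex `0`. -/
def friendshipPos (n : ℕ) : SCPos ℕ :=
  ⟨Finset.range (2 * n + 1),
   (((List.range n).flatMap fun i =>
      [(0, 2 * i + 1), (0, 2 * i + 2), (2 * i + 1, 2 * i + 2)]) : List (ℕ × ℕ))⟩

/-- The pinwheel graph `PW_n`: `n` copies of `C_4` sharing the common vertex `0`. -/
def pinwheelPos (n : ℕ) : SCPos ℕ :=
  ⟨Finset.range (3 * n + 1),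
   (((List.range n).flatMap fun i =>
      [(0, 3 * i + 1), (3 * i + 1, 3 * i + 2), (3 * i + 2, 3 * i + 3), (3 * i + 3, 0)]) :
     List (ℕ × ℕ))⟩

/-- The loopy star `L_n`: center `0`, outer vertices `1, …, n`, each joined to the
center by an edge and carrying one loop. -/
def loopyStarPos (n : ℕ) : SCPos ℕ :=
  ⟨Finset.range (n + 1),
   (((List.range n).flatMap fun i => [(0, i + 1), (i + 1, i + 1)]) : List (ℕ × ℕ))⟩

/-- The double loopy star `L(n,2)`: center `0`, outer vertices `1, …, n`, each joined
to the center by an edge and carrying two loops. -/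
def doubleLoopyStarPos (n : ℕ) : SCPos ℕ :=
  ⟨Finset.range (n + 1),
   (((List.range n).flatMap fun i => [(0, i + 1), (i + 1, i + 1), (i + 1, i + 1)]) :
     List (ℕ × ℕ))⟩

/-- The complete bipartite graph `K(1, b)` (a star with `b` leaves). -/
def starPos (b : ℕ) : SCPos ℕ :=
  ⟨Finset.range (b + 1), (((List.range b).map fun i => (0, i + 1)) : List (ℕ × ℕ))⟩

/-- The complete bipartite graph `K(2, b)`: part `{0, 1}` and part `{2, …, b+1}`. -/
def k2bPos (b : ℕ) : SCPos ℕ :=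
  ⟨Finset.range (b + 2),
   (((List.range b).flatMap fun j => [(0, j + 2), (1, j + 2)]) : List (ℕ × ℕ))⟩

/-- The balloon path `BP_n`: a path on vertices `0, …, n-1` with one loop at each vertex. -/
def balloonPathPos (n : ℕ) : SCPos ℕ :=
  ⟨Finset.range n,
   ((((List.range (n - 1)).map fun i => (i, i + 1)) ++
     ((List.range n).map fun i => (i, i))) : List (ℕ × ℕ))⟩

/-- The loopy cycle `C_(n,1)`: the cycle `C_n` with one extra loop at vertex `0`. -/
def loopyCyclePos (n : ℕ) : SCPos ℕ :=
  ⟨Finset.range n, (0, 0) ::ₘ (cyclePos n).edges⟩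

/-- The Strings and Coins position of a finite simple graph: all vertices,
and one (arbitrarily oriented) edge for each edge of the graph. -/
noncomputable def posOfGraph {W : Type} [Fintype W] [DecidableEq W]
    (G : SimpleGraph W) [DecidableRel G.Adj] : SCPos W :=
  ⟨Finset.univ, G.edgeFinset.val.map Quot.out⟩

section StringsAndCoinsAux

lemma mod_inj {n k a b : ℕ} (ha : a < n) (hb : b < n)
    (h : (k + a) % n = (k + b) % n) : a = b :=
  Nat.ModEq.eq_of_lt_of_lt (Nat.ModEq.add_left_cancel' k h) ha hb

lemma succ_mod (n a : ℕ) (hn : 2 ≤ n) : (a + 1) % n = (a % n + 1) % n := by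
  conv_lhs => rw [Nat.add_mod]
  rw [Nat.one_mod_eq_one.mpr (by omega)]

def fmax (best o : ℕ × ℕ) : ℕ × ℕ := if best.1 ≤ o.1 then o else best

lemma fmax_zero (a : ℕ × ℕ) : fmax (0, 0) a = a := by unfold fmax; simp

lemma foldl_fmax_mem : ∀ (l : List (ℕ × ℕ)) (b : ℕ × ℕ),
    List.foldl fmax b l = b ∨ List.foldl fmax b l ∈ l := by
  intro l
  induction l with
  | nil => intro b; left; rfl
  | cons a t ih =>
    intro b
    rcases ih (fmax b a) with h | h
    · rw [List.foldl_cons, h]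
      unfold fmax
      split
      · right; exact List.mem_cons_self
      · left; rfl
    · right; exact List.mem_cons_of_mem a h

lemma mem_foldl_fmax_zero (l : List (ℕ × ℕ)) (hl : l ≠ []) :
    List.foldl fmax (0, 0) l ∈ l := by
  cases l with
  | nil => simp at hl
  | cons a t =>
    rw [List.foldl_cons, fmax_zero]
    rcases foldl_fmax_mem t a with h | h
    · rw [h]; exact List.mem_cons_self
    · exact List.mem_cons_of_mem a h

lemma foldl_fmax_le_init : ∀ (l : List (ℕ × ℕ)) (b : ℕ × ℕ),
    b.1 ≤ (List.foldl fmax b l).1 := by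
  intro l
  induction l with
  | nil => intro b; exact le_refl _
  | cons a t ih =>
    intro b
    refine le_trans ?_ (ih (fmax b a))
    unfold fmax; split <;> simp_all

lemma foldl_fmax_le : ∀ (l : List (ℕ × ℕ)) (b o : ℕ × ℕ), o ∈ l →
    o.1 ≤ (List.foldl fmax b l).1 := by
  intro l
  induction l with
  | nil => intro b o h; simp at h
  | cons a t ih =>
    intro b o h
    rcases List.mem_cons.mp h with rfl | h
    · refine le_trans ?_ (foldl_fmax_le_init t (fmax b o))
      unfold fmax; split
      · simp
      · omega
    · exact ih _ o h

lemma foldl_fmax_const (c : ℕ × ℕ) : ∀ (l : List (ℕ × ℕ)), (∀ o ∈ l, o = c) →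
    List.foldl fmax c l = c := by
  intro l
  induction l with
  | nil => intro; rfl
  | cons a t ih =>
    intro h
    have ha : a = c := h a List.mem_cons_self
    subst ha
    rw [List.foldl_cons]
    have : fmax a a = a := by unfold fmax; simp
    rw [this]
    exact ih (fun o ho => h o (List.mem_cons_of_mem a ho))

lemma foldl_fmax_const' (c : ℕ × ℕ) (l : List (ℕ × ℕ)) (hl : l ≠ []) (h : ∀ o ∈ l, o = c) :
    List.foldl fmax (0, 0) l = c := by
  cases l with
  | nil => simp at hl
  | cons a t =>
    have ha : a = c := h a List.mem_cons_self
    subst ha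
    rw [List.foldl_cons]
    have : fmax (0, 0) a = a := by unfold fmax; simp
    rw [this]
    exact foldl_fmax_const a t (fun o ho => h o (List.mem_cons_of_mem a ho))

variable {V : Type} [DecidableEq V]

def poscount (p : SCPos V) : ℕ := (p.verts.filter (fun v => p.deg v ≠ 0)).card

lemma deg_remove_le (p : SCPos V) (e : V × V) (v : V) :
    (p.remove e).deg v ≤ p.deg v := by
  apply Multiset.card_le_card
  exact Multiset.filter_le_filter _ (Multiset.erase_le e p.edges)

lemma deg_remove_eq (p : SCPos V) (e : V × V) (v : V)
    (h : ¬ (e.1 = v ∨ e.2 = v)) : (p.remove e).deg v = p.deg v := by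
  unfold SCPos.remove SCPos.deg
  congr 1
  rw [← Multiset.sub_singleton, Multiset.filter_sub]
  have : Multiset.filter (fun f => f.1 = v ∨ f.2 = v) ({e} : Multiset (V × V)) = 0 := by
    rw [Multiset.filter_singleton, if_neg h]; rfl
  rw [this, Multiset.sub_zero]

lemma caps_add_poscount (p : SCPos V) (e : V × V) (he : e ∈ p.edges) :
    p.caps e + poscount (p.remove e) = poscount p := by
  unfold SCPos.caps poscount
  have hBA : (p.remove e).verts.filter (fun v => (p.remove e).deg v ≠ 0) ⊆
      p.verts.filter (fun v => p.deg v ≠ 0) := by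
    intro v hv
    simp only [Finset.mem_filter] at hv ⊢
    refine ⟨hv.1, fun h0 => hv.2 ?_⟩
    have := deg_remove_le p e v
    omega
  have key : p.verts.filter (fun v => (v = e.1 ∨ v = e.2) ∧ (p.remove e).deg v = 0) =
      (p.verts.filter (fun v => p.deg v ≠ 0)) \
      ((p.remove e).verts.filter (fun v => (p.remove e).deg v ≠ 0)) := by
    ext v
    simp only [Finset.mem_filter, Finset.mem_sdiff]
    constructor
    · rintro ⟨hv, hor, h0⟩
      refine ⟨⟨hv, ?_⟩, ?_⟩
      · unfold SCPos.deg
        intro hc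
        have : e ∈ Multiset.filter (fun f => f.1 = v ∨ f.2 = v) p.edges := by
          refine Multiset.mem_filter.mpr ⟨he, ?_⟩
          rcases hor with h | h
          · left; exact h.symm
          · right; exact h.symm
        rw [Multiset.card_eq_zero] at hc
        simp [hc] at this
      · intro hc
        exact hc.2 h0
    · rintro ⟨⟨hv, hd⟩, hnd⟩
      have h0 : (p.remove e).deg v = 0 := by
        by_contra h
        exact hnd ⟨hv, h⟩
      refine ⟨hv, ?_, h0⟩
      by_contra hor
      have heq := deg_remove_eq p e v
        (fun hc => hor (hc.elim (fun h => Or.inl h.symm) (fun h => Or.inr h.symm)))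
      rw [heq] at h0
      exact hd h0
  rw [key, Finset.card_sdiff_of_subset hBA]
  have : ((p.remove e).verts.filter (fun v => (p.remove e).deg v ≠ 0)).card ≤
      (p.verts.filter (fun v => p.deg v ≠ 0)).card := Finset.card_le_card hBA
  show _ + ((p.remove e).verts.filter _).card = _
  omega

noncomputable def outcome (p : SCPos V) (e : V × V) : ℕ × ℕ :=
  let s := (p.remove e).score
  let c := p.caps e
  if c = 0 then (s.2, s.1) else (s.1 + c, s.2)

lemma outcome_def (p : SCPos V) (e : V × V) : outcome p e =
    if p.caps e = 0 then ((p.remove e).score.2, (p.remove e).score.1)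
    else ((p.remove e).score.1 + p.caps e, (p.remove e).score.2) := rfl

lemma score_eq_foldl (p : SCPos V) (h : p.edges ≠ 0) :
    p.score = List.foldl fmax (0, 0) (p.edges.toList.attach.map (fun x => outcome p x.1)) := by
  rw [SCPos.score, dif_neg h]
  rfl

lemma score_ge (p : SCPos V) (e : V × V) (he : e ∈ p.edges) :
    (outcome p e).1 ≤ p.score.1 := by
  have h : p.edges ≠ 0 := fun h0 => by simp [h0] at he
  rw [score_eq_foldl p h]
  apply foldl_fmax_le
  exact List.mem_map.mpr ⟨⟨e, Multiset.mem_toList.mpr he⟩, List.mem_attach _ _, rfl⟩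

lemma score_sum_aux : ∀ (n : ℕ) (p : SCPos V), p.edges.card = n →
    p.score.1 + p.score.2 = poscount p := by
  intro n
  induction n using Nat.strong_induction_on with
  | _ n ih =>
    intro p hn
    by_cases h : p.edges = 0
    · rw [SCPos.score, dif_pos h]
      unfold poscount
      have hd : ∀ v, p.deg v = 0 := fun v => by simp [SCPos.deg, h]
      simp [hd]
    · rw [score_eq_foldl p h]
      have hne : p.edges.toList.attach.map (fun x => outcome p x.1) ≠ [] := by
        simp only [ne_eq, List.map_eq_nil_iff, List.attach_eq_nil_iff, Multiset.toList_eq_nil]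
        exact h
      have hm := mem_foldl_fmax_zero _ hne
      obtain ⟨x, hx, hout⟩ := List.mem_map.mp hm
      rw [← hout]
      have hxe : x.1 ∈ p.edges := Multiset.mem_toList.mp x.2
      have hcard : (p.remove x.1).edges.card < n := by
        rw [← hn]; exact Multiset.card_erase_lt_of_mem hxe
      have hs := ih _ hcard (p.remove x.1) rfl
      have hc := caps_add_poscount p x.1 hxe
      rw [outcome_def]
      split
      · next hc0 => simp only [Prod.fst, Prod.snd]; omega
      · next hc0 => simp only [Prod.fst, Prod.snd]; omega

lemma score_sum (p : SCPos V) : p.score.1 + p.score.2 = poscount p :=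
  score_sum_aux p.edges.card p rfl

def arc (n k m : ℕ) : SCPos ℕ :=
  ⟨Finset.range n, ((List.range m).map fun j => ((k + j) % n, (k + j + 1) % n) : List (ℕ × ℕ))⟩

lemma arc_edges_zero (n k : ℕ) : (arc n k 0).edges = 0 := rfl

lemma arc_edges_succ (n k m : ℕ) :
    (arc n k (m + 1)).edges = (k % n, (k + 1) % n) ::ₘ (arc n (k + 1) m).edges := by
  have hl : (List.range (m+1)).map (fun j => ((k + j) % n, (k + j + 1) % n)) =
      (k % n, (k + 1) % n) :: (List.range m).map
        (fun j => ((k + 1 + j) % n, (k + 1 + j + 1) % n)) := by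
    rw [List.range_succ_eq_map, List.map_cons, List.map_map]
    refine congrArg₂ _ (by simp) (List.map_congr_left ?_)
    intro j _
    show ((k + (j + 1)) % n, (k + (j + 1) + 1) % n) = _
    rw [show k + (j + 1) = k + 1 + j from by omega]
  show (((List.range (m+1)).map fun j => ((k + j) % n, (k + j + 1) % n) : List (ℕ × ℕ)) :
      Multiset (ℕ × ℕ)) = _
  rw [hl, ← Multiset.cons_coe]
  rfl

lemma mem_arc_edges {n k m : ℕ} {f : ℕ × ℕ} :
    f ∈ (arc n k m).edges ↔ ∃ j < m, ((k + j) % n, (k + j + 1) % n) = f := by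
  show f ∈ (((List.range m).map fun j => ((k + j) % n, (k + j + 1) % n)) : Multiset (ℕ × ℕ)) ↔ _
  rw [Multiset.mem_coe, List.mem_map]
  constructor
  · rintro ⟨j, hj, rfl⟩; exact ⟨j, List.mem_range.mp hj, rfl⟩
  · rintro ⟨j, hj, rfl⟩; exact ⟨j, List.mem_range.mpr hj, rfl⟩

lemma arc_deg_ne_zero {n k m : ℕ} (v : ℕ) (j : ℕ) (hj : j < m)
    (h : (k + j) % n = v ∨ (k + j + 1) % n = v) : (arc n k m).deg v ≠ 0 := by
  unfold SCPos.deg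
  rw [Ne, Multiset.card_eq_zero, Multiset.filter_eq_nil]
  push_neg
  exact ⟨((k + j) % n, (k + j + 1) % n), mem_arc_edges.mpr ⟨j, hj, rfl⟩, h⟩

lemma arc_deg_eq_zero {n k m : ℕ} (v : ℕ)
    (h : ∀ j < m, (k + j) % n ≠ v ∧ (k + j + 1) % n ≠ v) : (arc n k m).deg v = 0 := by
  unfold SCPos.deg
  rw [Multiset.card_eq_zero, Multiset.filter_eq_nil]
  rintro f hf
  obtain ⟨j, hj, rfl⟩ := mem_arc_edges.mp hf
  have := h j hj
  simp only []
  tauto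

lemma arc_deg_iff {n k m : ℕ} (hn : 1 ≤ m) (v : ℕ) :
    (arc n k m).deg v ≠ 0 ↔ ∃ j < m + 1, (k + j) % n = v := by
  constructor
  · intro h
    by_contra hc
    push_neg at hc
    refine h (arc_deg_eq_zero v fun j hj => ⟨hc j (by omega), ?_⟩)
    have := hc (j + 1) (by omega)
    intro hh
    exact this (by rw [show k + (j + 1) = k + j + 1 from by omega, hh])
  · rintro ⟨j, hj, rfl⟩
    rcases Nat.lt_or_ge j m with h | h
    · exact arc_deg_ne_zero _ j h (Or.inl rfl)
    · have hjm : j = m := by omega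
      subst hjm
      refine arc_deg_ne_zero _ (j - 1) (by omega) (Or.inr ?_)
      rw [show k + (j - 1) + 1 = k + j from by omega]

lemma arc_remove_head (n k m : ℕ) :
    (arc n k (m + 1)).remove (k % n, (k + 1) % n) = arc n (k + 1) m := by
  unfold SCPos.remove
  rw [arc_edges_succ, Multiset.erase_cons_head]
  rfl

lemma arc_deg_start_zero {n k m : ℕ} (hm : m ≤ n - 2) (hn : 3 ≤ n) :
    (arc n (k + 1) m).deg (k % n) = 0 := by
  apply arc_deg_eq_zero
  intro j hj
  constructor
  · rw [show k + 1 + j = k + (1 + j) from by omega]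
    intro hc
    have : (k + (1 + j)) % n = (k + 0) % n := by rw [hc]; simp
    have := mod_inj (by omega) (by omega) this
    omega
  · rw [show k + 1 + j + 1 = k + (2 + j) from by omega]
    intro hc
    have : (k + (2 + j)) % n = (k + 0) % n := by rw [hc]; simp
    have := mod_inj (by omega) (by omega) this
    omega

lemma caps_arc_head (n k m : ℕ) (hn : 3 ≤ n) (hm : m + 1 ≤ n - 1) :
    (arc n k (m + 1)).caps (k % n, (k + 1) % n) = if m = 0 then 2 else 1 := by
  have hne : k % n ≠ (k + 1) % n := by
    intro hc
    have : (k + 0) % n = (k + 1) % n := by simpa using hc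
    have := mod_inj (by omega) (by omega) this
    omega
  have hkn : k % n < n := Nat.mod_lt _ (by omega)
  have hk1n : (k + 1) % n < n := Nat.mod_lt _ (by omega)
  unfold SCPos.caps
  rw [arc_remove_head]
  have hstart : (arc n (k + 1) m).deg (k % n) = 0 := arc_deg_start_zero (by omega) hn
  rcases Nat.eq_zero_or_pos m with rfl | hm1
  · rw [if_pos rfl]
    have hdeg : ∀ v, (arc n (k + 1) 0).deg v = 0 := by
      intro v; apply arc_deg_eq_zero; intro j hj; omega
    have : (arc n k (0 + 1)).verts.filter
        (fun v => (v = (k % n, (k + 1) % n).1 ∨ v = (k % n, (k + 1) % n).2) ∧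
          (arc n (k + 1) 0).deg v = 0) = {k % n, (k + 1) % n} := by
      ext v
      simp only [Finset.mem_filter, Finset.mem_insert, Finset.mem_singleton, hdeg, and_true]
      constructor
      · rintro ⟨_, h⟩; exact h
      · rintro (rfl | rfl)
        · exact ⟨Finset.mem_range.mpr hkn, Or.inl rfl⟩
        · exact ⟨Finset.mem_range.mpr hk1n, Or.inr rfl⟩
    rw [this, Finset.card_insert_of_notMem (by simpa using hne), Finset.card_singleton]
  · rw [if_neg (by omega)]
    have hdeg1 : (arc n (k + 1) m).deg ((k + 1) % n) ≠ 0 := by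
      refine arc_deg_ne_zero _ 0 hm1 (Or.inl ?_)
      simp
    have : (arc n k (m + 1)).verts.filter
        (fun v => (v = (k % n, (k + 1) % n).1 ∨ v = (k % n, (k + 1) % n).2) ∧
          (arc n (k + 1) m).deg v = 0) = {k % n} := by
      ext v
      simp only [Finset.mem_filter, Finset.mem_singleton]
      constructor
      · rintro ⟨_, (rfl | rfl), h0⟩
        · rfl
        · exact absurd h0 hdeg1
      · rintro rfl
        exact ⟨Finset.mem_range.mpr hkn, Or.inl rfl, hstart⟩
    rw [this, Finset.card_singleton]

lemma arc_verts (n k m : ℕ) : (arc n k m).verts = Finset.range n := rfl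

lemma poscount_arc (n k m : ℕ) (hn : 3 ≤ n) (h1 : 1 ≤ m) (h2 : m ≤ n - 1) :
    poscount (arc n k m) = m + 1 := by
  unfold poscount
  have key : (arc n k m).verts.filter (fun v => (arc n k m).deg v ≠ 0) =
      (Finset.range (m + 1)).image (fun j => (k + j) % n) := by
    ext v
    simp only [Finset.mem_filter, Finset.mem_image, Finset.mem_range, arc_verts]
    rw [arc_deg_iff h1]
    constructor
    · rintro ⟨_, j, hj, rfl⟩; exact ⟨j, hj, rfl⟩
    · rintro ⟨j, hj, rfl⟩
      exact ⟨Nat.mod_lt (k + j) (show 0 < n by omega), j, hj, rfl⟩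
  rw [key, Finset.card_image_of_injOn, Finset.card_range]
  intro a ha b hb hab
  simp only [Finset.coe_range, Set.mem_Iio] at ha hb
  exact mod_inj (by omega) (by omega) hab

lemma score_arc (n : ℕ) (hn : 3 ≤ n) :
    ∀ m, 1 ≤ m → m ≤ n - 1 → ∀ k, (arc n k m).score = (m + 1, 0) := by
  intro m
  induction m using Nat.strong_induction_on with
  | _ m ih =>
    intro h1 h2 k
    obtain ⟨m', rfl⟩ : ∃ m', m = m' + 1 := ⟨m - 1, by omega⟩
    have hmem : ((k % n, (k + 1) % n) : ℕ × ℕ) ∈ (arc n k (m' + 1)).edges := by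
      rw [arc_edges_succ]; exact Multiset.mem_cons_self _ _
    have hcaps := caps_arc_head n k m' hn h2
    have hub : (arc n k (m' + 1)).score.1 + (arc n k (m' + 1)).score.2 = m' + 2 := by
      rw [score_sum, poscount_arc n k (m' + 1) hn (by omega) h2]
    have hout : (outcome (arc n k (m' + 1)) (k % n, (k + 1) % n)).1 = m' + 2 := by
      rw [outcome_def, arc_remove_head]
      rcases Nat.eq_zero_or_pos m' with rfl | hm1
      · rw [if_pos rfl] at hcaps
        rw [hcaps, if_neg (by omega)]
        have : (arc n (k + 1) 0).score = (0, 0) := by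
          rw [SCPos.score, dif_pos (arc_edges_zero n (k + 1))]
        rw [this]
      · rw [if_neg (by omega)] at hcaps
        rw [hcaps, if_neg (by omega)]
        have := ih m' (by omega) (by omega) (by omega) (k + 1)
        rw [this]
    have hge := score_ge _ _ hmem
    rw [hout] at hge
    have ha : (arc n k (m' + 1)).score.1 = m' + 2 := by omega
    have hb : (arc n k (m' + 1)).score.2 = 0 := by omega
    rw [← Prod.mk.eta (p := (arc n k (m' + 1)).score), ha, hb]

lemma cycle_index (n i : ℕ) (hn : 3 ≤ n) (hi : i < n) :
    (Multiset.range n) = i ::ₘ (Multiset.range (n - 1)).map (fun j => (i + 1 + j) % n) := by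
  have hnodup : (i ::ₘ (Multiset.range (n - 1)).map (fun j => (i + 1 + j) % n)).Nodup := by
    rw [Multiset.nodup_cons]
    constructor
    · intro hmem
      obtain ⟨j, hj, hji⟩ := Multiset.mem_map.mp hmem
      rw [Multiset.mem_range] at hj
      have : (i + (1 + j)) % n = (i + 0) % n := by
        rw [show i + (1 + j) = i + 1 + j from by omega, hji]
        simp [Nat.mod_eq_of_lt hi]
      have := mod_inj (by omega) (by omega) this
      omega
    · refine Multiset.Nodup.map_on ?_ (Multiset.nodup_range _)
      intro a ha b hb hab
      rw [Multiset.mem_range] at ha hb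
      rw [show i + 1 + a = i + (1 + a) from by omega,
        show i + 1 + b = i + (1 + b) from by omega] at hab
      have := mod_inj (n := n) (k := i) (by omega) (by omega) hab
      omega
  have hsub : i ::ₘ (Multiset.range (n - 1)).map (fun j => (i + 1 + j) % n) ≤
      Multiset.range n := by
    rw [Multiset.le_iff_subset hnodup]
    intro a ha
    rw [Multiset.mem_range]
    rcases Multiset.mem_cons.mp ha with rfl | ha
    · exact hi
    · obtain ⟨j, hj, rfl⟩ := Multiset.mem_map.mp ha
      exact Nat.mod_lt _ (show 0 < n by omega)
  have hcard : Multiset.card (Multiset.range n) ≤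
      Multiset.card (i ::ₘ (Multiset.range (n - 1)).map (fun j => (i + 1 + j) % n)) := by
    simp only [Multiset.card_cons, Multiset.card_map, Multiset.card_range]
    omega
  exact (Multiset.eq_of_le_of_card_le hsub hcard).symm

lemma cycle_edges_decomp (n i : ℕ) (hn : 3 ≤ n) (hi : i < n) :
    (cyclePos n).edges = (i, (i + 1) % n) ::ₘ (arc n (i + 1) (n - 1)).edges := by
  have h1 : (cyclePos n).edges = (Multiset.range n).map (fun r => (r, (r + 1) % n)) := rfl
  have h2 : (arc n (i + 1) (n - 1)).edges =
      ((Multiset.range (n - 1)).map (fun j => (i + 1 + j) % n)).map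
        (fun r => (r, (r + 1) % n)) := by
    rw [Multiset.map_map]
    have hl : ((List.range (n - 1)).map fun j => ((i + 1 + j) % n, (i + 1 + j + 1) % n)) =
        (List.range (n - 1)).map
          ((fun r => (r, (r + 1) % n)) ∘ fun j => (i + 1 + j) % n) := by
      apply List.map_congr_left
      intro j _
      simp only [Function.comp_apply]
      rw [Prod.mk.injEq]
      exact ⟨rfl, succ_mod n _ (by omega)⟩
    calc (arc n (i + 1) (n - 1)).edges
        = (((List.range (n - 1)).map fun j => ((i + 1 + j) % n, (i + 1 + j + 1) % n) :
            List (ℕ × ℕ)) : Multiset (ℕ × ℕ)) := rfl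
      _ = _ := by rw [hl]; rfl
  rw [h1, h2, cycle_index n i hn hi, Multiset.map_cons]

lemma cycle_remove (n i : ℕ) (hn : 3 ≤ n) (hi : i < n) :
    (cyclePos n).remove (i, (i + 1) % n) = arc n (i + 1) (n - 1) := by
  unfold SCPos.remove
  rw [cycle_edges_decomp n i hn hi, Multiset.erase_cons_head]
  rfl

lemma caps_cycle (n i : ℕ) (hn : 3 ≤ n) (hi : i < n) :
    (cyclePos n).caps (i, (i + 1) % n) = 0 := by
  unfold SCPos.caps
  rw [Finset.card_eq_zero, cycle_remove n i hn hi]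
  rw [Finset.filter_eq_empty_iff]
  intro v _
  rintro ⟨hor, h0⟩
  have hd1 : (arc n (i + 1) (n - 1)).deg i ≠ 0 := by
    refine arc_deg_ne_zero _ (n - 2) (by omega) (Or.inr ?_)
    rw [show i + 1 + (n - 2) + 1 = i + n from by omega, Nat.add_mod_right,
      Nat.mod_eq_of_lt hi]
  have hd2 : (arc n (i + 1) (n - 1)).deg ((i + 1) % n) ≠ 0 := by
    refine arc_deg_ne_zero _ 0 (by omega) (Or.inl ?_)
    simp
  rcases hor with rfl | rfl
  · exact hd1 h0
  · exact hd2 h0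

end StringsAndCoinsAux

/-- On the cycle `C_n` (`n ≥ 3`), the second player captures all `n` vertices. -/
theorem stmt1 (n : ℕ) (hn : 3 ≤ n) : (cyclePos n).score = (0, n) := by
  have hne : (cyclePos n).edges ≠ 0 := by
    have : ((0 : ℕ), 1 % n) ∈ (cyclePos n).edges := by
      have h0 : (0 : ℕ) ∈ List.range n := List.mem_range.mpr (by omega)
      exact Multiset.mem_coe.mpr (List.mem_map.mpr ⟨0, h0, rfl⟩)
    intro h0
    rw [h0] at this
    simp at this
  rw [score_eq_foldl _ hne]
  apply foldl_fmax_const'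
  · simp only [ne_eq, List.map_eq_nil_iff, List.attach_eq_nil_iff, Multiset.toList_eq_nil]
    exact hne
  · intro o ho
    obtain ⟨x, hx, rfl⟩ := List.mem_map.mp ho
    have hxe : x.1 ∈ (cyclePos n).edges := Multiset.mem_toList.mp x.2
    obtain ⟨i, hi, hxi⟩ : ∃ i, i < n ∧ (i, (i + 1) % n) = x.1 := by
      have : x.1 ∈ (((List.range n).map fun i => (i, (i + 1) % n) : List (ℕ × ℕ)) :
          Multiset (ℕ × ℕ)) := hxe
      rw [Multiset.mem_coe, List.mem_map] at this
      obtain ⟨i, hi, heq⟩ := this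
      exact ⟨i, List.mem_range.mp hi, heq⟩
    rw [← hxi, outcome_def, caps_cycle n i hn hi, if_pos rfl, cycle_remove n i hn hi,
      score_arc n hn (n - 1) (by omega) (by omega) (i + 1)]
    simp only [Prod.fst, Prod.snd]
    congr 1
    omega
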